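/- Let k be a field of characteristic 0 and let m, n ∈ k with n ≠ 0 and m² - 5n² - 5 ≠ 0. Then the ternary quadratic form Q₇(x₁,x₂,x₃) = 5x₁² + 2m·x₁x₂ + (m²-5n²-4)x₂² + (4m²-20n²-20)x₂x₃ + (5m²-25n²-25)x₃² is equivalent over k to the diagonal form 5(x₁² - 5x₂² + (m² - 5n² - 5)x₃²); explicitly, the substitution replacing the basis vector e₂ by (m·e₁ - 5e₂ + 2e₃)/n realizes the equivalence. -/

import Mathlib

/-- Over a field k of characteristic 0, with n ≠ 0 and m² - 5n² - 5 ≠ 0, the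
substitution replacing e₂ by (m·e₁ - 5e₂ + 2e₃)/n transforms Q₇ into the diagonal
form 5(x₁² - 5x₂² + (m² - 5n² - 5)x₃²). -/
theorem Q7_diagonalization (k : Type) [Field k] [CharZero k] (m n : k)
    (hn : n ≠ 0) (hD : m ^ 2 - 5 * n ^ 2 - 5 ≠ 0) :
    ∀ x₁ x₂ x₃ : k,
      5 * (x₁ + m / n * x₂) ^ 2
        + 2 * m * (x₁ + m / n * x₂) * (-5 / n * x₂)
        + (m ^ 2 - 5 * n ^ 2 - 4) * (-5 / n * x₂) ^ 2
        + (4 * m ^ 2 - 20 * n ^ 2 - 20) * (-5 / n * x₂) * (x₃ + 2 / n * x₂)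
        + (5 * m ^ 2 - 25 * n ^ 2 - 25) * (x₃ + 2 / n * x₂) ^ 2
      = 5 * (x₁ ^ 2 - 5 * x₂ ^ 2 + (m ^ 2 - 5 * n ^ 2 - 5) * x₃ ^ 2) := by
  intro x₁ x₂ x₃; field_simp
  ring_nf
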